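/- Let X₁, X₂, U₁, U₂ be real Hilbert spaces, let M₁ : X₁ → X₁ be strongly accretive at x̄₁ with constant c₁ > 0 and M₂ : X₂ → X₂ strongly accretive at x̄₂ with constant c₂ > 0, and let B₁ : U₁ → X₁, B₂ : U₂ → X₂, 𝓕 : U₂ → U₁ be bounded linear with adjoints B₁*, B₂*, 𝓕*. Define M(x₁, x₂) = (M₁(x₁) + B₁ 𝓕 B₂* x₂, M₂(x₂) - B₂ 𝓕* B₁* x₁) and assume M(x̄₁, x̄₂) = 0. If (x₁, x₂) : ℝ → X₁ × X₂ satisfies HasDerivAt (x₁, x₂) (-M(x₁(t), x₂(t))) t for all t ≥ 0, then for all t ≥ 0, ‖(x₁(t) - x̄₁, x₂(t) - x̄₂)‖ ≤ ‖(x₁(0) - x̄₁, x₂(0) - x̄₂)‖ · exp(-min(c₁, c₂) t); i.e. the power-preservingly interconnected system with zero external input converges exponentially to the equilibrium (x̄₁, x̄₂). -/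

import Mathlib

set_option maxHeartbeats 1000000


open scoped RealInnerProductSpace

/-- Exponential convergence of the power-preservingly interconnected system of two
strongly accretive monotone pH systems with zero external input: the product-norm
distance to the equilibrium `(x̄₁, x̄₂)` decays with rate `min c₁ c₂`. -/
theorem interconnected_exponential_convergence
    {X₁ X₂ U₁ U₂ : Type*}
    [NormedAddCommGroup X₁] [InnerProductSpace ℝ X₁] [CompleteSpace X₁]
    [NormedAddCommGroup X₂] [InnerProductSpace ℝ X₂] [CompleteSpace X₂]
    [NormedAddCommGroup U₁] [InnerProductSpace ℝ U₁] [CompleteSpace U₁]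
    [NormedAddCommGroup U₂] [InnerProductSpace ℝ U₂] [CompleteSpace U₂]
    (M₁ : X₁ → X₁) (M₂ : X₂ → X₂) (xbar₁ : X₁) (xbar₂ : X₂)
    (c₁ c₂ : ℝ) (hc₁ : 0 < c₁) (hc₂ : 0 < c₂)
    (hM₁ : ∀ x : X₁, c₁ * ‖x - xbar₁‖ ^ 2 ≤ ⟪x - xbar₁, M₁ x - M₁ xbar₁⟫)
    (hM₂ : ∀ x : X₂, c₂ * ‖x - xbar₂‖ ^ 2 ≤ ⟪x - xbar₂, M₂ x - M₂ xbar₂⟫)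
    (B₁ : U₁ →L[ℝ] X₁) (B₂ : U₂ →L[ℝ] X₂) (F : U₂ →L[ℝ] U₁)
    (heq₁ : M₁ xbar₁ + B₁ (F (ContinuousLinearMap.adjoint B₂ xbar₂)) = 0)
    (heq₂ : M₂ xbar₂ - B₂ (ContinuousLinearMap.adjoint F (ContinuousLinearMap.adjoint B₁ xbar₁)) = 0)
    (x₁ : ℝ → X₁) (x₂ : ℝ → X₂)
    (hx : ∀ t : ℝ, 0 ≤ t →
      HasDerivAt (fun s => (x₁ s, x₂ s))
        (-(M₁ (x₁ t) + B₁ (F (ContinuousLinearMap.adjoint B₂ (x₂ t)))),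
         -(M₂ (x₂ t) - B₂ (ContinuousLinearMap.adjoint F (ContinuousLinearMap.adjoint B₁ (x₁ t))))) t) :
    ∀ t : ℝ, 0 ≤ t →
      Real.sqrt (‖x₁ t - xbar₁‖ ^ 2 + ‖x₂ t - xbar₂‖ ^ 2)
        ≤ Real.sqrt (‖x₁ 0 - xbar₁‖ ^ 2 + ‖x₂ 0 - xbar₂‖ ^ 2)
          * Real.exp (-(min c₁ c₂) * t) := by
  intro t ht
  set c : ℝ := min c₁ c₂ with hcdef
  have hcpos : 0 < c := lt_min hc₁ hc₂
  set g : ℝ → ℝ := fun s => ‖x₁ s - xbar₁‖ ^ 2 + ‖x₂ s - xbar₂‖ ^ 2 with hgdef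
  -- the candidate derivative of g
  set D : ℝ → ℝ := fun s =>
    2 * ⟪x₁ s - xbar₁, -(M₁ (x₁ s) + B₁ (F (ContinuousLinearMap.adjoint B₂ (x₂ s))))⟫ +
    2 * ⟪x₂ s - xbar₂, -(M₂ (x₂ s) - B₂ (ContinuousLinearMap.adjoint F (ContinuousLinearMap.adjoint B₁ (x₁ s))))⟫
    with hDdef
  have hx₁ : ∀ s : ℝ, 0 ≤ s → HasDerivAt x₁
      (-(M₁ (x₁ s) + B₁ (F (ContinuousLinearMap.adjoint B₂ (x₂ s))))) s := fun s hs =>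
    ((ContinuousLinearMap.fst ℝ X₁ X₂).hasFDerivAt.comp_hasDerivAt s (hx s hs))
  have hx₂ : ∀ s : ℝ, 0 ≤ s → HasDerivAt x₂
      (-(M₂ (x₂ s) - B₂ (ContinuousLinearMap.adjoint F (ContinuousLinearMap.adjoint B₁ (x₁ s))))) s := fun s hs =>
    ((ContinuousLinearMap.snd ℝ X₁ X₂).hasFDerivAt.comp_hasDerivAt s (hx s hs))
  have hgderiv : ∀ s : ℝ, 0 ≤ s → HasDerivAt g (D s) s := by
    intro s hs
    have h1 : HasDerivAt (fun u => x₁ u - xbar₁)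
        (-(M₁ (x₁ s) + B₁ (F (ContinuousLinearMap.adjoint B₂ (x₂ s))))) s :=
      (hx₁ s hs).sub_const xbar₁
    have h2 : HasDerivAt (fun u => x₂ u - xbar₂)
        (-(M₂ (x₂ s) - B₂ (ContinuousLinearMap.adjoint F (ContinuousLinearMap.adjoint B₁ (x₁ s))))) s :=
      (hx₂ s hs).sub_const xbar₂
    have i1 := (HasDerivAt.inner ℝ h1 h1)
    have i2 := (HasDerivAt.inner ℝ h2 h2)
    have := i1.add i2
    have heqfun : (fun u => (⟪x₁ u - xbar₁, x₁ u - xbar₁⟫ : ℝ) + ⟪x₂ u - xbar₂, x₂ u - xbar₂⟫) = g := by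
      funext u
      simp [hgdef, real_inner_self_eq_norm_sq]
    simp only [Pi.add_def] at this
    rw [heqfun] at this
    refine this.congr_deriv ?_
    simp only [hDdef]
    rw [real_inner_comm (x₁ s - xbar₁), real_inner_comm (x₂ s - xbar₂)]
    ring
  -- the key dissipation inequality
  have hDle : ∀ s : ℝ, 0 ≤ s → D s ≤ -(2 * c) * g s := by
    intro s _
    have hm1 : M₁ xbar₁ = -B₁ (F (ContinuousLinearMap.adjoint B₂ xbar₂)) :=
      eq_neg_of_add_eq_zero_left heq₁
    have hm2 : M₂ xbar₂ = B₂ (ContinuousLinearMap.adjoint F (ContinuousLinearMap.adjoint B₁ xbar₁)) :=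
      sub_eq_zero.mp heq₂
    obtain ⟨a, hadef⟩ : ∃ a : X₁, a = x₁ s - xbar₁ := ⟨_, rfl⟩
    obtain ⟨b, hbdef⟩ : ∃ b : X₂, b = x₂ s - xbar₂ := ⟨_, rfl⟩
    have key1 : M₁ (x₁ s) + B₁ (F (ContinuousLinearMap.adjoint B₂ (x₂ s))) =
        (M₁ (x₁ s) - M₁ xbar₁) + B₁ (F (ContinuousLinearMap.adjoint B₂ b)) := by
      rw [hbdef, map_sub, map_sub, map_sub, hm1]; abel
    have key2 : M₂ (x₂ s) - B₂ (ContinuousLinearMap.adjoint F (ContinuousLinearMap.adjoint B₁ (x₁ s))) =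
        (M₂ (x₂ s) - M₂ xbar₂) - B₂ (ContinuousLinearMap.adjoint F (ContinuousLinearMap.adjoint B₁ a)) := by
      rw [hadef, map_sub, map_sub, map_sub, hm2]; abel
    have cross : (⟪a, B₁ (F (ContinuousLinearMap.adjoint B₂ b))⟫ : ℝ) =
        ⟪b, B₂ (ContinuousLinearMap.adjoint F (ContinuousLinearMap.adjoint B₁ a))⟫ := by
      calc (⟪a, B₁ (F (ContinuousLinearMap.adjoint B₂ b))⟫ : ℝ)
          = ⟪ContinuousLinearMap.adjoint B₁ a, F (ContinuousLinearMap.adjoint B₂ b)⟫ :=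
            (ContinuousLinearMap.adjoint_inner_left B₁ _ a).symm
        _ = ⟪ContinuousLinearMap.adjoint F (ContinuousLinearMap.adjoint B₁ a),
              ContinuousLinearMap.adjoint B₂ b⟫ :=
            (ContinuousLinearMap.adjoint_inner_left F _ _).symm
        _ = ⟪ContinuousLinearMap.adjoint B₂ b,
              ContinuousLinearMap.adjoint F (ContinuousLinearMap.adjoint B₁ a)⟫ := real_inner_comm _ _
        _ = ⟪b, B₂ (ContinuousLinearMap.adjoint F (ContinuousLinearMap.adjoint B₁ a))⟫ :=
            ContinuousLinearMap.adjoint_inner_left B₂ _ b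
    have t1 : (⟪a, -(M₁ (x₁ s) + B₁ (F (ContinuousLinearMap.adjoint B₂ (x₂ s))))⟫ : ℝ) =
        -⟪a, M₁ (x₁ s) - M₁ xbar₁⟫ - ⟪a, B₁ (F (ContinuousLinearMap.adjoint B₂ b))⟫ := by
      rw [key1, inner_neg_right, inner_add_right]; ring
    have t2 : (⟪b, -(M₂ (x₂ s) - B₂ (ContinuousLinearMap.adjoint F (ContinuousLinearMap.adjoint B₁ (x₁ s))))⟫ : ℝ) =
        -⟪b, M₂ (x₂ s) - M₂ xbar₂⟫ + ⟪b, B₂ (ContinuousLinearMap.adjoint F (ContinuousLinearMap.adjoint B₁ a))⟫ := by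
      rw [key2, inner_neg_right, inner_sub_right]; ring
    have hDval : D s = -(2 * ⟪a, M₁ (x₁ s) - M₁ xbar₁⟫) - 2 * ⟪b, M₂ (x₂ s) - M₂ xbar₂⟫ := by
      simp only [hDdef]
      rw [← hadef, ← hbdef, t1, t2, cross]
      ring
    have e1 := hM₁ (x₁ s)
    have e2 := hM₂ (x₂ s)
    rw [← hadef] at e1
    rw [← hbdef] at e2
    have ha2 : (0:ℝ) ≤ ‖a‖ ^ 2 := sq_nonneg _
    have hb2 : (0:ℝ) ≤ ‖b‖ ^ 2 := sq_nonneg _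
    have f1 : c * ‖a‖ ^ 2 ≤ c₁ * ‖a‖ ^ 2 := mul_le_mul_of_nonneg_right (min_le_left _ _) ha2
    have f2 : c * ‖b‖ ^ 2 ≤ c₂ * ‖b‖ ^ 2 := mul_le_mul_of_nonneg_right (min_le_right _ _) hb2
    have hgval : g s = ‖a‖ ^ 2 + ‖b‖ ^ 2 := by rw [hgdef, hadef, hbdef]
    rw [hDval, hgval]
    linarith [e1, e2, f1, f2]
  -- the Lyapunov-type function h
  set h : ℝ → ℝ := fun s => g s * Real.exp (2 * c * s) with hhdef
  have hhderiv : ∀ s : ℝ, 0 ≤ s →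
      HasDerivAt h (D s * Real.exp (2 * c * s) + g s * (Real.exp (2 * c * s) * (2 * c))) s := by
    intro s hs
    have hexp : HasDerivAt (fun u => Real.exp (2 * c * u)) (Real.exp (2 * c * s) * (2 * c)) s := by
      have : HasDerivAt (fun u : ℝ => 2 * c * u) (2 * c) s := by
        simpa using (hasDerivAt_id s).const_mul (2 * c)
      exact (Real.hasDerivAt_exp (2 * c * s)).comp s this
    exact (hgderiv s hs).mul hexp
  have hanti : AntitoneOn h (Set.Ici (0:ℝ)) := by
    apply antitoneOn_of_deriv_nonpos (convex_Ici 0)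
    · intro s hs
      exact ((hhderiv s hs).continuousAt).continuousWithinAt
    · intro s hs
      rw [interior_Ici] at hs
      exact ((hhderiv s (le_of_lt hs)).differentiableAt).differentiableWithinAt
    · intro s hs
      rw [interior_Ici] at hs
      rw [(hhderiv s (le_of_lt hs)).deriv]
      have hexppos : 0 < Real.exp (2 * c * s) := Real.exp_pos _
      have := hDle s (le_of_lt hs)
      nlinarith
  have hht : h t ≤ h 0 := hanti (Set.self_mem_Ici) (Set.mem_Ici.mpr ht) ht
  have hg0 : (0:ℝ) ≤ g 0 := add_nonneg (sq_nonneg _) (sq_nonneg _)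
  have hgt : g t ≤ g 0 * Real.exp (-(2 * c) * t) := by
    have h0 : h 0 = g 0 := by simp [hhdef]
    rw [h0] at hht
    have hexppos : 0 < Real.exp (2 * c * t) := Real.exp_pos _
    have : g t = h t * Real.exp (-(2 * c) * t) := by
      simp only [hhdef]
      rw [mul_assoc, ← Real.exp_add]
      simp
    rw [this]
    have hexpnn : 0 ≤ Real.exp (-(2 * c) * t) := (Real.exp_pos _).le
    exact mul_le_mul_of_nonneg_right hht hexpnn
  calc Real.sqrt (g t) ≤ Real.sqrt (g 0 * Real.exp (-(2 * c) * t)) := Real.sqrt_le_sqrt hgt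
    _ = Real.sqrt (g 0) * Real.exp (-c * t) := by
        rw [Real.sqrt_mul hg0]
        congr 1
        rw [show -(2 * c) * t = -c * t + -c * t by ring, Real.exp_add,
          Real.sqrt_mul_self (Real.exp_pos _).le]
    _ = Real.sqrt (g 0) * Real.exp (-(min c₁ c₂) * t) := by rw [hcdef]
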